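/- Let A = (A_1, ..., A_d) be a commuting d-tuple of contractions on a Hilbert space H satisfying von Neumann's inequality, and let B = (B_1, ..., B_d) be a commuting d-tuple of contractions on a Hilbert space K satisfying the matrix-version of von Neumann's inequality. Then the tuple A ⊗ B = (A_1 ⊗ B_1, ..., A_d ⊗ B_d) satisfies von Neumann's inequality: for every polynomial p in d variables, ‖p(A ⊗ B)‖ ≤ sup_{z ∈ D^d} |p(z)|. -/

import Mathlib

/-- `T^α = T_1^{α_1} ⋯ T_d^{α_d}` for a (commuting) tuple in a possibly noncommutative ring. -/
noncomputable def tuplePow {d : ℕ} {R : Type*} [Monoid R] (T : Fin d → R) (α : Fin d →₀ ℕ) : R :=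
  (List.ofFn fun j => T j ^ α j).prod

/-- Evaluation `p(T) = Σ_α a_α T^α` of a polynomial on a tuple of operators. -/
noncomputable def polyEval {d : ℕ} {R : Type*} [Ring R] [Algebra ℂ R] (T : Fin d → R)
    (p : MvPolynomial (Fin d) ℂ) : R :=
  (AddMonoidAlgebra.coeff p).sum fun α a => a • tuplePow T α

/-- `sup_{z ∈ 𝔻^d} |p(z)|`, the supremum of `|p|` over the open unit polydisc. -/
noncomputable def polySup {d : ℕ} (p : MvPolynomial (Fin d) ℂ) : ℝ :=
  ⨆ z : {z : Fin d → ℂ // ∀ i, ‖z i‖ < 1}, ‖MvPolynomial.eval z.1 p‖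

/-- The operator `(M_{ij})` on the `m`-fold Hilbert space direct sum `E^{(m)}` induced by an
`m × m` matrix of operators on `E`. -/
noncomputable def opMatrix {m : ℕ} {E : Type*} [NormedAddCommGroup E] [NormedSpace ℂ E]
    (M : Matrix (Fin m) (Fin m) (E →L[ℂ] E)) :
    PiLp 2 (fun _ : Fin m => E) →L[ℂ] PiLp 2 (fun _ : Fin m => E) :=
  ((PiLp.continuousLinearEquiv 2 ℂ (fun _ : Fin m => E)).symm.toContinuousLinearMap).comp
    ((ContinuousLinearMap.pi fun i => ∑ j, (M i j).comp (ContinuousLinearMap.proj j)).comp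
      (PiLp.continuousLinearEquiv 2 ℂ (fun _ : Fin m => E)).toContinuousLinearMap)


/-! ### Auxiliary lemmas -/

open scoped Classical

section polyEvalAux
variable {d : ℕ} {R : Type*} [Ring R] [Algebra ℂ R] (T : Fin d → R)

lemma polyEval_add (p q : MvPolynomial (Fin d) ℂ) :
    polyEval T (p + q) = polyEval T p + polyEval T q := by
  unfold polyEval
  exact Finsupp.sum_add_index' (fun α => zero_smul ℂ _) (fun α a b => add_smul a b _)

lemma polyEval_monomial (α : Fin d →₀ ℕ) (c : ℂ) :
    polyEval T (MvPolynomial.monomial α c) = c • tuplePow T α := by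
  unfold polyEval
  exact MvPolynomial.sum_monomial_eq (zero_smul ℂ _)

lemma polyEval_eq (p : MvPolynomial (Fin d) ℂ) :
    polyEval T p = ∑ α ∈ p.support, p.coeff α • tuplePow T α := by
  rw [polyEval, MvPolynomial.sum_def]

lemma polyEval_sum_monomial (s : Finset (Fin d →₀ ℕ)) (f : (Fin d →₀ ℕ) → ℂ) :
    polyEval T (∑ α ∈ s, MvPolynomial.monomial α (f α)) = ∑ α ∈ s, f α • tuplePow T α := by
  classical
  induction s using Finset.induction with
  | empty => simp [polyEval]
  | insert _ _ h ih =>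
      rw [Finset.sum_insert h, polyEval_add, polyEval_monomial, Finset.sum_insert h, ih]

end polyEvalAux

/-- index list for a multi-index -/
def idxList {d : ℕ} (α : Fin d →₀ ℕ) : List (Fin d) :=
  (List.ofFn fun j => List.replicate (α j) j).flatten

lemma tuplePow_eq_map_prod {d : ℕ} {R : Type*} [Monoid R] (T : Fin d → R) (α : Fin d →₀ ℕ) :
    tuplePow T α = ((idxList α).map T).prod := by
  unfold tuplePow idxList
  rw [List.map_flatten, List.map_ofFn, List.prod_flatten, List.map_ofFn]
  refine congrArg List.prod (congrArg List.ofFn ?_)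
  funext j
  simp [Function.comp, List.map_replicate, List.prod_replicate]

section act
variable {d : ℕ} {H K E : Type*}
    [NormedAddCommGroup H] [NormedSpace ℂ H]
    [NormedAddCommGroup K] [NormedSpace ℂ K]
    [NormedAddCommGroup E] [NormedSpace ℂ E]
    (A : Fin d → (H →L[ℂ] H)) (B : Fin d → (K →L[ℂ] K))
    (t : H →ₗ[ℂ] K →ₗ[ℂ] E) (AB : Fin d → (E →L[ℂ] E))

lemma prod_map_apply (hAB : ∀ j x y, AB j (t x y) = t (A j x) (B j y))
    (l : List (Fin d)) (x : H) (y : K) :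
    ((l.map AB).prod) (t x y) = t (((l.map A).prod) x) (((l.map B).prod) y) := by
  induction l with
  | nil => simp
  | cons j l ih =>
      simp only [List.map_cons, List.prod_cons, ContinuousLinearMap.mul_apply, ih, hAB]

lemma tuplePow_apply (hAB : ∀ j x y, AB j (t x y) = t (A j x) (B j y))
    (α : Fin d →₀ ℕ) (x : H) (y : K) :
    (tuplePow AB α) (t x y) = t ((tuplePow A α) x) ((tuplePow B α) y) := by
  rw [tuplePow_eq_map_prod, tuplePow_eq_map_prod, tuplePow_eq_map_prod]
  exact prod_map_apply A B t AB hAB _ x y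

end act

section sup
variable {d : ℕ}

instance : Nonempty {z : Fin d → ℂ // ∀ i, ‖z i‖ < 1} :=
  ⟨⟨0, fun i => by simp⟩⟩

lemma norm_eval_le (p : MvPolynomial (Fin d) ℂ) (z : Fin d → ℂ) (hz : ∀ i, ‖z i‖ < 1) :
    ‖MvPolynomial.eval z p‖ ≤ ∑ α ∈ p.support, ‖p.coeff α‖ := by
  rw [MvPolynomial.eval_eq']
  refine (norm_sum_le _ _).trans (Finset.sum_le_sum fun α _ => ?_)
  rw [norm_mul]
  have h1 : ‖∏ i, z i ^ α i‖ ≤ 1 := by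
    rw [norm_prod]
    refine Finset.prod_le_one (fun i _ => norm_nonneg _) (fun i _ => ?_)
    rw [norm_pow]
    exact pow_le_one₀ (norm_nonneg _) (hz i).le
  calc ‖p.coeff α‖ * ‖∏ i, z i ^ α i‖ ≤ ‖p.coeff α‖ * 1 :=
        mul_le_mul_of_nonneg_left h1 (norm_nonneg _)
    _ = ‖p.coeff α‖ := mul_one _

lemma bddAbove_polySup (p : MvPolynomial (Fin d) ℂ) :
    BddAbove (Set.range fun z : {z : Fin d → ℂ // ∀ i, ‖z i‖ < 1} =>
      ‖MvPolynomial.eval z.1 p‖) := by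
  refine ⟨∑ α ∈ p.support, ‖p.coeff α‖, ?_⟩
  rintro r ⟨z, rfl⟩
  exact norm_eval_le p z.1 z.2

lemma le_polySup (p : MvPolynomial (Fin d) ℂ) (z : Fin d → ℂ) (hz : ∀ i, ‖z i‖ < 1) :
    ‖MvPolynomial.eval z p‖ ≤ polySup p :=
  le_ciSup (bddAbove_polySup p) (⟨z, hz⟩ : {z : Fin d → ℂ // ∀ i, ‖z i‖ < 1})

lemma polySup_nonneg (p : MvPolynomial (Fin d) ℂ) : 0 ≤ polySup p :=
  Real.iSup_nonneg fun z => norm_nonneg _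

/-- the polynomial `w ↦ p(z*w)` -/
noncomputable def scaledPoly (z : Fin d → ℂ) (p : MvPolynomial (Fin d) ℂ) :
    MvPolynomial (Fin d) ℂ :=
  ∑ α ∈ p.support, MvPolynomial.monomial α (p.coeff α * ∏ i, z i ^ α i)

lemma eval_scaledPoly (z w : Fin d → ℂ) (p : MvPolynomial (Fin d) ℂ) :
    MvPolynomial.eval w (scaledPoly z p) = MvPolynomial.eval (fun i => z i * w i) p := by
  rw [scaledPoly, map_sum]
  rw [MvPolynomial.eval_eq']
  refine Finset.sum_congr rfl fun α _ => ?_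
  rw [MvPolynomial.eval_monomial]
  rw [mul_assoc]
  congr 1
  rw [Finsupp.prod_fintype _ _ (fun i => pow_zero _), ← Finset.prod_mul_distrib]
  exact Finset.prod_congr rfl fun i _ => (mul_pow _ _ _).symm

lemma polySup_scaledPoly_le (z : Fin d → ℂ) (hz : ∀ i, ‖z i‖ < 1)
    (p : MvPolynomial (Fin d) ℂ) : polySup (scaledPoly z p) ≤ polySup p := by
  refine Real.iSup_le (fun w => ?_) (polySup_nonneg p)
  rw [eval_scaledPoly]
  refine le_polySup p _ fun i => ?_
  rw [norm_mul]
  calc ‖z i‖ * ‖w.1 i‖ ≤ 1 * ‖w.1 i‖ :=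
        mul_le_mul_of_nonneg_right (hz i).le (norm_nonneg _)
    _ = ‖w.1 i‖ := one_mul _
    _ < 1 := w.2 i

end sup

lemma opMatrix_apply {m : ℕ} {E : Type*} [NormedAddCommGroup E] [NormedSpace ℂ E]
    (M : Matrix (Fin m) (Fin m) (E →L[ℂ] E)) (Y : PiLp 2 (fun _ : Fin m => E)) (i : Fin m) :
    opMatrix M Y i = ∑ j, M i j (Y j) := by
  simp [opMatrix, ContinuousLinearMap.sum_apply]

lemma toEuclideanCLM_apply {m : ℕ} (M : Matrix (Fin m) (Fin m) ℂ)
    (c : EuclideanSpace ℂ (Fin m)) (i : Fin m) :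
    Matrix.toEuclideanCLM (𝕜 := ℂ) M c i = ∑ j, M i j * c j := by
  have h := Matrix.ofLp_toEuclideanCLM (𝕜 := ℂ) M c
  have h2 : WithLp.ofLp (Matrix.toEuclideanCLM (𝕜 := ℂ) M c) i
      = (Matrix.mulVec M (WithLp.ofLp c)) i := by rw [h]
  simpa [Matrix.mulVec, dotProduct] using h2

section rep
variable {d : ℕ} {H K E : Type*}
    [NormedAddCommGroup H] [InnerProductSpace ℂ H]
    [NormedAddCommGroup K] [InnerProductSpace ℂ K]
    [NormedAddCommGroup E] [InnerProductSpace ℂ E]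

lemma t_smul_left (t : H →ₗ[ℂ] K →ₗ[ℂ] E) (c : ℂ) (x : H) (y : K) :
    t (c • x) y = c • t x y := by
  rw [map_smul, LinearMap.smul_apply]

lemma exists_plain_rep (t : H →ₗ[ℂ] K →ₗ[ℂ] E) (ξ : E)
    (hξ : ξ ∈ Submodule.span ℂ {e : E | ∃ x y, e = t x y}) :
    ∃ (m : ℕ) (x : Fin m → H) (y : Fin m → K), ξ = ∑ k, t (x k) (y k) := by
  induction hξ using Submodule.span_induction with
  | mem e he =>
      obtain ⟨x, y, rfl⟩ := he
      exact ⟨1, fun _ => x, fun _ => y, by simp⟩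
  | zero => exact ⟨0, fun k => k.elim0, fun k => k.elim0, by simp⟩
  | add a b _ _ iha ihb =>
      obtain ⟨m, x, y, rfl⟩ := iha
      obtain ⟨n, x', y', rfl⟩ := ihb
      refine ⟨m + n, Fin.append x x', Fin.append y y', ?_⟩
      rw [Fin.sum_univ_add]
      simp [Fin.append_left, Fin.append_right]
  | smul c a _ ih =>
      obtain ⟨m, x, y, rfl⟩ := ih
      refine ⟨m, fun k => c • x k, y, ?_⟩
      rw [Finset.smul_sum]
      exact Finset.sum_congr rfl fun k _ => (t_smul_left t c _ _).symm

lemma exists_good_rep (t : H →ₗ[ℂ] K →ₗ[ℂ] E) (ξ : E)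
    (hξ : ξ ∈ Submodule.span ℂ {e : E | ∃ x y, e = t x y}) :
    ∃ (m : ℕ) (x : Fin m → H) (y : Fin m → K), ξ = ∑ k, t (x k) (y k) ∧
      (∀ k l, (inner ℂ (x k) (x l) : ℂ) = if k = l ∧ x k ≠ 0 then 1 else 0) ∧
      (∀ k, x k = 0 → y k = 0) := by
  obtain ⟨m, x, y, rfl⟩ := exists_plain_rep t _ hξ
  classical
  set S : Submodule ℂ H := Submodule.span ℂ (Set.range x) with hS
  haveI : FiniteDimensional ℂ S := FiniteDimensional.span_of_finite ℂ (Set.finite_range x)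
  set n := Module.finrank ℂ S with hn
  set b := stdOrthonormalBasis ℂ S with hb
  set e : Fin n → H := fun j => ((b j : S) : H) with he
  have he_on : ∀ j l, (inner ℂ (e j) (e l) : ℂ) = if j = l then 1 else 0 := by
    intro j l
    have := b.orthonormal
    rw [orthonormal_iff_ite] at this
    simpa [he, Submodule.coe_inner] using this j l
  have he_ne : ∀ j, e j ≠ 0 := by
    intro j hj
    have h1 : ‖e j‖ = 1 := by
      rw [he]
      rw [Submodule.norm_coe]
      exact b.orthonormal.1 j
    rw [hj, norm_zero] at h1
    norm_num at h1
  have hx : ∀ k, x k = ∑ j, (inner ℂ (e j) (x k) : ℂ) • e j := by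
    intro k
    have hk : x k ∈ S := Submodule.subset_span (Set.mem_range_self k)
    have hsum := b.sum_repr ⟨x k, hk⟩
    have h2 := congrArg (Subtype.val) hsum
    simp only [Submodule.coe_sum, Submodule.coe_smul] at h2
    conv_lhs => rw [← h2]
    refine Finset.sum_congr rfl fun j _ => ?_
    congr 1
    rw [b.repr_apply_apply]
    rfl
  refine ⟨n, e, fun j => ∑ k, (inner ℂ (e j) (x k) : ℂ) • y k, ?_, ?_, ?_⟩
  · calc ∑ k, t (x k) (y k)
        = ∑ k, ∑ j, (inner ℂ (e j) (x k) : ℂ) • t (e j) (y k) := by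
          refine Finset.sum_congr rfl fun k _ => ?_
          conv_lhs => rw [hx k]
          rw [map_sum, LinearMap.sum_apply]
          exact Finset.sum_congr rfl fun j _ => t_smul_left t _ _ _
      _ = ∑ j, t (e j) (∑ k, (inner ℂ (e j) (x k) : ℂ) • y k) := by
          rw [Finset.sum_comm]
          refine Finset.sum_congr rfl fun j _ => ?_
          rw [map_sum]
          exact Finset.sum_congr rfl fun k _ => by rw [map_smul]
  · intro k l
    rw [he_on k l]
    simp [he_ne k]
  · intro k hk
    exact absurd hk (he_ne k)

lemma pad_rep (t : H →ₗ[ℂ] K →ₗ[ℂ] E) (m n : ℕ) (x : Fin m → H) (y : Fin m → K)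
    (h1 : ∀ k l, (inner ℂ (x k) (x l) : ℂ) = if k = l ∧ x k ≠ 0 then 1 else 0)
    (h2 : ∀ k, x k = 0 → y k = 0) :
    ∃ (x' : Fin (m + n) → H) (y' : Fin (m + n) → K),
      (∑ k, t (x' k) (y' k)) = (∑ k, t (x k) (y k)) ∧
      (∀ k l, (inner ℂ (x' k) (x' l) : ℂ) = if k = l ∧ x' k ≠ 0 then 1 else 0) ∧
      (∀ k, x' k = 0 → y' k = 0) := by
  classical
  refine ⟨fun k => if h : (k : ℕ) < m then x ⟨k, h⟩ else 0,
          fun k => if h : (k : ℕ) < m then y ⟨k, h⟩ else 0, ?_, ?_, ?_⟩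
  · rw [Fin.sum_univ_add]
    have : ∀ i : Fin n, ¬ ((Fin.natAdd m i : ℕ) < m) := fun i => by simp
    simp [this]
  · intro k l
    dsimp only
    by_cases hk : (k : ℕ) < m <;> by_cases hl : (l : ℕ) < m
    · simp only [dif_pos hk, dif_pos hl]
      rw [h1]
      by_cases hkl : k = l
      · subst hkl; simp
      · have hne : (⟨(k:ℕ), hk⟩ : Fin m) ≠ ⟨(l:ℕ), hl⟩ := by
          intro hc
          exact hkl (Fin.val_injective (Fin.mk_eq_mk.mp hc))
        simp [hkl, hne]
    · have hkl : ¬ (k = l) := fun hc => hl (hc ▸ hk)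
      simp [dif_pos hk, dif_neg hl, hkl]
    · have hkl : ¬ (k = l) := fun hc => hk (hc ▸ hl)
      simp [dif_neg hk, dif_pos hl, hkl]
    · simp [dif_neg hk, dif_neg hl]
  · intro k hk
    dsimp only at hk ⊢
    by_cases h : (k : ℕ) < m
    · rw [dif_pos h] at hk ⊢; exact h2 _ hk
    · rw [dif_neg h]

lemma pad_rep' (t : H →ₗ[ℂ] K →ₗ[ℂ] E) (m M : ℕ) (hm : m ≤ M)
    (x : Fin m → H) (y : Fin m → K)
    (h1 : ∀ k l, (inner ℂ (x k) (x l) : ℂ) = if k = l ∧ x k ≠ 0 then 1 else 0)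
    (h2 : ∀ k, x k = 0 → y k = 0) :
    ∃ (x' : Fin M → H) (y' : Fin M → K),
      (∑ k, t (x' k) (y' k)) = (∑ k, t (x k) (y k)) ∧
      (∀ k l, (inner ℂ (x' k) (x' l) : ℂ) = if k = l ∧ x' k ≠ 0 then 1 else 0) ∧
      (∀ k, x' k = 0 → y' k = 0) := by
  obtain ⟨n, rfl⟩ := Nat.exists_eq_add_of_le hm
  exact pad_rep t m n x y h1 h2

end rep

section geom
variable {F : Type*} [NormedAddCommGroup F] [InnerProductSpace ℂ F]

lemma norm_le_of_inner_ub (u : F) (D : ℝ) (hD : 0 ≤ D)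
    (h : ∀ v : F, ‖(inner ℂ v u : ℂ)‖ ≤ D * ‖v‖) : ‖u‖ ≤ D := by
  rcases eq_or_ne ‖u‖ 0 with h0 | h0
  · rw [h0]; exact hD
  · have hu := h u
    have h2 : ‖(inner ℂ u u : ℂ)‖ = ‖u‖ * ‖u‖ := by
      rw [inner_self_eq_norm_sq_to_K, norm_pow, RCLike.norm_ofReal, abs_norm, pow_two]
    rw [h2] at hu
    exact le_of_mul_le_mul_right hu (lt_of_le_of_ne (norm_nonneg u) (Ne.symm h0))

lemma norm_le_of_dense_inner_ub (S : Submodule ℂ F) (hd : S.topologicalClosure = ⊤)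
    (u : F) (D : ℝ) (hD : 0 ≤ D)
    (h : ∀ v ∈ S, ‖(inner ℂ v u : ℂ)‖ ≤ D * ‖v‖) : ‖u‖ ≤ D := by
  refine norm_le_of_inner_ub u D hD fun v => ?_
  have hclosed : IsClosed {v : F | ‖(inner ℂ v u : ℂ)‖ ≤ D * ‖v‖} := by
    apply isClosed_le
    · exact (Continuous.inner continuous_id continuous_const).norm
    · exact continuous_norm.const_smul D
  have hsub : (S : Set F) ⊆ {v : F | ‖(inner ℂ v u : ℂ)‖ ≤ D * ‖v‖} := fun v hv => h v hv
  have hsc : closure (S : Set F) ⊆ {v : F | ‖(inner ℂ v u : ℂ)‖ ≤ D * ‖v‖} :=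
    closure_minimal hsub hclosed
  have hcl : closure (S : Set F) = Set.univ := by
    have := congrArg (fun W : Submodule ℂ F => (W : Set F)) hd
    simpa [Submodule.topologicalClosure_coe] using this
  exact hsc (hcl ▸ Set.mem_univ v)

lemma norm_eq_of_inner_self_eq {G : Type*} [NormedAddCommGroup G] [InnerProductSpace ℂ G]
    (u : F) (v : G) (h : (inner ℂ u u : ℂ) = inner ℂ v v) : ‖u‖ = ‖v‖ := by
  have h2 : ‖u‖ ^ 2 = ‖v‖ ^ 2 := by
    rw [← inner_self_eq_norm_sq (𝕜 := ℂ) u, ← inner_self_eq_norm_sq (𝕜 := ℂ) v]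
    exact congrArg RCLike.re h
  calc ‖u‖ = Real.sqrt (‖u‖ ^ 2) := (Real.sqrt_sq (norm_nonneg u)).symm
    _ = Real.sqrt (‖v‖ ^ 2) := by rw [h2]
    _ = ‖v‖ := Real.sqrt_sq (norm_nonneg v)

end geom

section geom2
variable {H K E : Type*}
    [NormedAddCommGroup H] [InnerProductSpace ℂ H]
    [NormedAddCommGroup K] [InnerProductSpace ℂ K]
    [NormedAddCommGroup E] [InnerProductSpace ℂ E]

lemma norm_rep_eq (t : H →ₗ[ℂ] K →ₗ[ℂ] E)
    (ht_inner : ∀ (x x' : H) (y y' : K),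
      (inner ℂ (t x y) (t x' y') : ℂ) = (inner ℂ x x' : ℂ) * (inner ℂ y y' : ℂ))
    {m : ℕ} (x : Fin m → H) (y : Fin m → K)
    (h1 : ∀ k l, (inner ℂ (x k) (x l) : ℂ) = if k = l ∧ x k ≠ 0 then 1 else 0)
    (h2 : ∀ k, x k = 0 → y k = 0) :
    ‖∑ k, t (x k) (y k)‖ =
      ‖(WithLp.equiv 2 (∀ _ : Fin m, K)).symm y‖ := by
  apply norm_eq_of_inner_self_eq
  rw [sum_inner]
  have hstep : ∀ l, (inner ℂ (t (x l) (y l)) (∑ k, t (x k) (y k)) : ℂ) = inner ℂ (y l) (y l) := by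
    intro l
    rw [inner_sum]
    have hterm : ∀ k, (inner ℂ (t (x l) (y l)) (t (x k) (y k)) : ℂ)
        = (if l = k ∧ x l ≠ 0 then 1 else 0) * inner ℂ (y l) (y k) := by
      intro k; rw [ht_inner, h1]
    rw [Finset.sum_congr rfl fun k _ => hterm k]
    by_cases hx : x l = 0
    · have hy : y l = 0 := h2 l hx
      simp [hx, hy]
    · rw [Finset.sum_eq_single l]
      · simp [hx]
      · intro k _ hk
        simp [Ne.symm hk]
      · intro hl; exact absurd (Finset.mem_univ l) hl
  rw [Finset.sum_congr rfl fun l _ => hstep l]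
  rw [PiLp.inner_apply]
  rfl

lemma norm_sum_smul_le {m : ℕ} (x : Fin m → H)
    (h1 : ∀ k l, (inner ℂ (x k) (x l) : ℂ) = if k = l ∧ x k ≠ 0 then 1 else 0)
    (c : EuclideanSpace ℂ (Fin m)) :
    ‖∑ k, c k • x k‖ ≤ ‖c‖ := by
  have key : (inner ℂ (∑ k, c k • x k) (∑ k, c k • x k) : ℂ)
      = ∑ k, (if x k ≠ 0 then 1 else 0) * ((starRingEnd ℂ) (c k) * c k) := by
    rw [sum_inner]
    refine Finset.sum_congr rfl fun l _ => ?_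
    rw [inner_smul_left, inner_sum]
    have hterm : ∀ k, (inner ℂ (x l) (c k • x k) : ℂ)
        = c k * (if l = k ∧ x l ≠ 0 then 1 else 0) := by
      intro k; rw [inner_smul_right, h1]
    rw [Finset.sum_congr rfl fun k _ => hterm k]
    by_cases hx : x l = 0
    · simp [hx]
    · rw [Finset.sum_eq_single l]
      · simp [hx, mul_comm]
      · intro k _ hk; simp [Ne.symm hk]
      · intro hl; exact absurd (Finset.mem_univ l) hl
  have hre : ‖∑ k, c k • x k‖ ^ 2 ≤ ‖c‖ ^ 2 := by
    rw [← inner_self_eq_norm_sq (𝕜 := ℂ) (∑ k, c k • x k), ← inner_self_eq_norm_sq (𝕜 := ℂ) c,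
      key, PiLp.inner_apply]
    rw [map_sum, map_sum]
    refine Finset.sum_le_sum fun k _ => ?_
    have hck : (inner ℂ (c k) (c k) : ℂ) = (starRingEnd ℂ) (c k) * c k := by
      rw [RCLike.inner_apply, mul_comm]
    rw [hck]
    by_cases hx : x k ≠ 0
    · simp [hx]
    · simp only [hx, if_false, zero_mul]
      rw [← Complex.normSq_eq_conj_mul_self]
      simpa using Complex.normSq_nonneg (c k)
  calc ‖∑ k, c k • x k‖ = Real.sqrt (‖∑ k, c k • x k‖ ^ 2) := (Real.sqrt_sq (norm_nonneg _)).symm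
    _ ≤ Real.sqrt (‖c‖ ^ 2) := Real.sqrt_le_sqrt hre
    _ = ‖c‖ := Real.sqrt_sq (norm_nonneg _)

end geom2

/-- Let `A` be a commuting `d`-tuple of contractions on a Hilbert space `H`
satisfying von Neumann's inequality, and `B` a commuting `d`-tuple of contractions on a
Hilbert space `K` satisfying the matrix-version of von Neumann's inequality. Then
`A ⊗ B = (A_1 ⊗ B_1, …, A_d ⊗ B_d)` on the Hilbert space tensor product `H ⊗ K` (axiomatized
here by a bilinear map `t` with `⟪t x y, t x' y'⟫ = ⟪x,x'⟫⟪y,y'⟫`, total elementary tensors,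
and `(A_j ⊗ B_j)(t x y) = t (A_j x) (B_j y)`) satisfies von Neumann's inequality. -/
theorem tensor_vN_of_vN_and_matrix_vN {d : ℕ} {H K E : Type*}
    [NormedAddCommGroup H] [InnerProductSpace ℂ H] [CompleteSpace H]
    [NormedAddCommGroup K] [InnerProductSpace ℂ K] [CompleteSpace K]
    [NormedAddCommGroup E] [InnerProductSpace ℂ E] [CompleteSpace E]
    (A : Fin d → (H →L[ℂ] H)) (B : Fin d → (K →L[ℂ] K))
    (hAcomm : ∀ i j, Commute (A i) (A j)) (hBcomm : ∀ i j, Commute (B i) (B j))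
    (hAcontr : ∀ j, ‖A j‖ ≤ 1) (hBcontr : ∀ j, ‖B j‖ ≤ 1)
    (hAvN : ∀ p : MvPolynomial (Fin d) ℂ, ‖polyEval A p‖ ≤ polySup p)
    (hBmatvN : ∀ (m : ℕ) (P : Matrix (Fin m) (Fin m) (MvPolynomial (Fin d) ℂ)),
      ‖opMatrix (Matrix.of fun i j => polyEval B (P i j))‖ ≤
        ⨆ z : {z : Fin d → ℂ // ∀ i, ‖z i‖ < 1},
          ‖Matrix.toEuclideanCLM (𝕜 := ℂ) (P.map (MvPolynomial.eval z.1))‖)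
    (t : H →ₗ[ℂ] K →ₗ[ℂ] E)
    (ht_inner : ∀ (x x' : H) (y y' : K),
      (inner ℂ (t x y) (t x' y') : ℂ) = (inner ℂ x x' : ℂ) * (inner ℂ y y' : ℂ))
    (ht_dense : (Submodule.span ℂ {e : E | ∃ x y, e = t x y}).topologicalClosure = ⊤)
    (AB : Fin d → (E →L[ℂ] E))
    (hAB : ∀ j x y, AB j (t x y) = t (A j x) (B j y)) :
    ∀ p : MvPolynomial (Fin d) ℂ, ‖polyEval AB p‖ ≤ polySup p := by
  intro p
  have hC0 : 0 ≤ polySup p := polySup_nonneg p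
  classical
  -- action of `polyEval AB p` on elementary tensors
  have happ : ∀ (x : H) (y : K), polyEval AB p (t x y)
      = ∑ α ∈ p.support, p.coeff α • t (tuplePow A α x) (tuplePow B α y) := by
    intro x y
    rw [polyEval_eq, ContinuousLinearMap.sum_apply]
    refine Finset.sum_congr rfl fun α _ => ?_
    rw [ContinuousLinearMap.smul_apply, tuplePow_apply A B t AB hAB]
  -- the key bilinear estimate for pseudo-orthonormal representations
  have key : ∀ (m : ℕ) (x x' : Fin m → H) (y y' : Fin m → K),
      (∀ k l, (inner ℂ (x k) (x l) : ℂ) = if k = l ∧ x k ≠ 0 then 1 else 0) →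
      (∀ k, x k = 0 → y k = 0) →
      (∀ k l, (inner ℂ (x' k) (x' l) : ℂ) = if k = l ∧ x' k ≠ 0 then 1 else 0) →
      (∀ k, x' k = 0 → y' k = 0) →
      ‖(inner ℂ (∑ l, t (x' l) (y' l)) (polyEval AB p (∑ k, t (x k) (y k))) : ℂ)‖
        ≤ polySup p * (‖∑ k, t (x k) (y k)‖ * ‖∑ l, t (x' l) (y' l)‖) := by
    intro m x x' y y' hx1 hx2 hx1' hx2'
    set P : Matrix (Fin m) (Fin m) (MvPolynomial (Fin d) ℂ) :=
      Matrix.of fun l k => ∑ α ∈ p.support,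
        MvPolynomial.monomial α (p.coeff α * (inner ℂ (x' l) (tuplePow A α (x k)) : ℂ)) with hP
    set Y : PiLp 2 (fun _ : Fin m => K) := (WithLp.equiv 2 _).symm y with hY
    set Y' : PiLp 2 (fun _ : Fin m => K) := (WithLp.equiv 2 _).symm y' with hY'
    set Mop := opMatrix (Matrix.of fun i j => polyEval B (P i j)) with hMop
    -- the inner ℂ product identity
    have hid : (inner ℂ (∑ l, t (x' l) (y' l)) (polyEval AB p (∑ k, t (x k) (y k))) : ℂ)
        = inner ℂ Y' (Mop Y) := by
      rw [map_sum (polyEval AB p), sum_inner]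
      have hL : ∀ l, (inner ℂ (t (x' l) (y' l)) (∑ k, polyEval AB p (t (x k) (y k))) : ℂ)
          = ∑ k, ∑ α ∈ p.support, p.coeff α *
              ((inner ℂ (x' l) (tuplePow A α (x k)) : ℂ) *
                (inner ℂ (y' l) (tuplePow B α (y k)) : ℂ)) := by
        intro l
        rw [inner_sum]
        refine Finset.sum_congr rfl fun k _ => ?_
        rw [happ, inner_sum]
        refine Finset.sum_congr rfl fun α _ => ?_
        rw [inner_smul_right, ht_inner]
      rw [Finset.sum_congr rfl fun l _ => hL l]
      rw [PiLp.inner_apply]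
      refine Finset.sum_congr rfl fun l _ => ?_
      have hMopY : Mop Y l = ∑ k, polyEval B (P l k) (Y k) := by
        rw [hMop, opMatrix_apply]
        rfl
      have hYl : Y' l = y' l := rfl
      rw [hMopY, hYl, inner_sum]
      refine Finset.sum_congr rfl fun k _ => ?_
      have hPB : polyEval B (P l k) = ∑ α ∈ p.support,
          (p.coeff α * (inner ℂ (x' l) (tuplePow A α (x k)) : ℂ)) • tuplePow B α := by
        rw [hP]
        exact polyEval_sum_monomial B _ _
      have hYk : Y k = y k := rfl
      rw [hPB, ContinuousLinearMap.sum_apply, hYk, inner_sum]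
      refine Finset.sum_congr rfl fun α _ => ?_
      rw [ContinuousLinearMap.smul_apply, inner_smul_right]
      ring
    -- norm bound on the operator matrix
    have hM : ‖Mop‖ ≤ polySup p := by
      refine (hBmatvN m P).trans (Real.iSup_le (fun z => ?_) hC0)
      set Tz := polyEval A (scaledPoly z.1 p) with hTz
      have hTznorm : ‖Tz‖ ≤ polySup p := (hAvN _).trans (polySup_scaledPoly_le z.1 z.2 p)
      have hent : ∀ l k, (P.map (MvPolynomial.eval z.1)) l k
          = (inner ℂ (x' l) (Tz (x k)) : ℂ) := by
        intro l k
        rw [Matrix.map_apply, hP, Matrix.of_apply, map_sum]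
        rw [hTz, scaledPoly, polyEval_sum_monomial, ContinuousLinearMap.sum_apply, inner_sum]
        refine Finset.sum_congr rfl fun α _ => ?_
        rw [MvPolynomial.eval_monomial, ContinuousLinearMap.smul_apply, inner_smul_right]
        rw [Finsupp.prod_fintype _ _ (fun i => pow_zero _)]
        ring
      refine ContinuousLinearMap.opNorm_le_bound _ hC0 fun c => ?_
      refine norm_le_of_inner_ub _ (polySup p * ‖c‖)
        (mul_nonneg hC0 (norm_nonneg c)) fun c' => ?_
      have hinner : (inner ℂ c'
            (Matrix.toEuclideanCLM (𝕜 := ℂ) (P.map (MvPolynomial.eval z.1)) c) : ℂ)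
          = inner ℂ (∑ l, c' l • x' l) (Tz (∑ k, c k • x k)) := by
        rw [PiLp.inner_apply]
        have hR : (inner ℂ (∑ l, c' l • x' l) (Tz (∑ k, c k • x k)) : ℂ)
            = ∑ l, ∑ k, (starRingEnd ℂ) (c' l) *
                (c k * (inner ℂ (x' l) (Tz (x k)) : ℂ)) := by
          rw [sum_inner]
          refine Finset.sum_congr rfl fun l _ => ?_
          rw [inner_smul_left, map_sum, inner_sum]
          rw [Finset.mul_sum]
          refine Finset.sum_congr rfl fun k _ => ?_
          rw [map_smul, inner_smul_right]
        rw [hR]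
        refine Finset.sum_congr rfl fun l _ => ?_
        rw [RCLike.inner_apply, toEuclideanCLM_apply, Finset.sum_mul]
        refine Finset.sum_congr rfl fun k _ => ?_
        rw [hent]
        ring
      rw [hinner]
      calc ‖(inner ℂ (∑ l, c' l • x' l) (Tz (∑ k, c k • x k)) : ℂ)‖
          ≤ ‖∑ l, c' l • x' l‖ * ‖Tz (∑ k, c k • x k)‖ := norm_inner_le_norm _ _
        _ ≤ ‖c'‖ * (‖Tz‖ * ‖∑ k, c k • x k‖) := by
            refine mul_le_mul (norm_sum_smul_le x' hx1' c') (Tz.le_opNorm _)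
              (norm_nonneg _) (norm_nonneg _)
        _ ≤ ‖c'‖ * (polySup p * ‖c‖) := by
            refine mul_le_mul_of_nonneg_left ?_ (norm_nonneg _)
            exact mul_le_mul hTznorm (norm_sum_smul_le x hx1 c) (norm_nonneg _) hC0
        _ = polySup p * ‖c‖ * ‖c'‖ := by ring
    -- norms of the representations
    have hYn : ‖∑ k, t (x k) (y k)‖ = ‖Y‖ := norm_rep_eq t ht_inner x y hx1 hx2
    have hY'n : ‖∑ l, t (x' l) (y' l)‖ = ‖Y'‖ := norm_rep_eq t ht_inner x' y' hx1' hx2'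
    rw [hid, hYn, hY'n]
    calc ‖(inner ℂ Y' (Mop Y) : ℂ)‖ ≤ ‖Y'‖ * ‖Mop Y‖ := norm_inner_le_norm _ _
      _ ≤ ‖Y'‖ * (‖Mop‖ * ‖Y‖) :=
          mul_le_mul_of_nonneg_left (Mop.le_opNorm Y) (norm_nonneg _)
      _ ≤ ‖Y'‖ * (polySup p * ‖Y‖) := by
          refine mul_le_mul_of_nonneg_left ?_ (norm_nonneg _)
          exact mul_le_mul_of_nonneg_right hM (norm_nonneg _)
      _ = polySup p * (‖Y‖ * ‖Y'‖) := by ring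
  -- the estimate on the dense span
  have key2 : ∀ ξ ∈ Submodule.span ℂ {e : E | ∃ x y, e = t x y},
      ∀ η ∈ Submodule.span ℂ {e : E | ∃ x y, e = t x y},
      ‖(inner ℂ η (polyEval AB p ξ) : ℂ)‖ ≤ polySup p * ‖ξ‖ * ‖η‖ := by
    intro ξ hξ η hη
    obtain ⟨m1, x, y, rfl, hx1, hx2⟩ := exists_good_rep t _ hξ
    obtain ⟨m2, x', y', hrep', hx1', hx2'⟩ := exists_good_rep t _ hη
    obtain ⟨X, Yv, hXY, hX1, hX2⟩ :=
      pad_rep' t m1 (max m1 m2) (le_max_left _ _) x y hx1 hx2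
    obtain ⟨X', Yv', hXY', hX1', hX2'⟩ :=
      pad_rep' t m2 (max m1 m2) (le_max_right _ _) x' y' hx1' hx2'
    have hη' : η = ∑ l, t (X' l) (Yv' l) := by rw [hXY', ← hrep']
    have hξ' : (∑ k, t (x k) (y k)) = ∑ k, t (X k) (Yv k) := hXY.symm
    rw [hξ', hη']
    have := key (max m1 m2) X X' Yv Yv' hX1 hX2 hX1' hX2'
    calc ‖(inner ℂ (∑ l, t (X' l) (Yv' l)) (polyEval AB p (∑ k, t (X k) (Yv k))) : ℂ)‖
        ≤ polySup p * (‖∑ k, t (X k) (Yv k)‖ * ‖∑ l, t (X' l) (Yv' l)‖) := this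
      _ = polySup p * ‖∑ k, t (X k) (Yv k)‖ * ‖∑ l, t (X' l) (Yv' l)‖ := by ring
  -- pointwise bound on the dense span
  have key3 : ∀ ξ ∈ Submodule.span ℂ {e : E | ∃ x y, e = t x y},
      ‖polyEval AB p ξ‖ ≤ polySup p * ‖ξ‖ := by
    intro ξ hξ
    refine norm_le_of_dense_inner_ub _ ht_dense _ _
      (mul_nonneg hC0 (norm_nonneg ξ)) fun η hη => ?_
    calc ‖(inner ℂ η (polyEval AB p ξ) : ℂ)‖ ≤ polySup p * ‖ξ‖ * ‖η‖ := key2 ξ hξ η hη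
      _ = polySup p * ‖ξ‖ * ‖η‖ := rfl
  -- extend to all of `E` by density
  refine ContinuousLinearMap.opNorm_le_bound _ hC0 fun ξ => ?_
  have hclosed : IsClosed {ξ : E | ‖polyEval AB p ξ‖ ≤ polySup p * ‖ξ‖} := by
    apply isClosed_le
    · exact ((polyEval AB p).continuous).norm
    · exact continuous_norm.const_smul (polySup p)
  have hsub : ((Submodule.span ℂ {e : E | ∃ x y, e = t x y}) : Set E)
      ⊆ {ξ : E | ‖polyEval AB p ξ‖ ≤ polySup p * ‖ξ‖} := fun ξ hξ => key3 ξ hξ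
  have hsc : closure ((Submodule.span ℂ {e : E | ∃ x y, e = t x y}) : Set E)
      ⊆ {ξ : E | ‖polyEval AB p ξ‖ ≤ polySup p * ‖ξ‖} := closure_minimal hsub hclosed
  have hcl : closure ((Submodule.span ℂ {e : E | ∃ x y, e = t x y}) : Set E) = Set.univ := by
    have := congrArg (fun W : Submodule ℂ E => (W : Set E)) ht_dense
    simpa [Submodule.topologicalClosure_coe] using this
  exact hsc (hcl ▸ Set.mem_univ ξ)
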